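/- Given an increasing nearly-consecutive sequence L of length s+1 starting at 0 and ending at s with distinguished index i₀ (2 ≤ i₀ ≤ s), and integers m > s and M ≥ 2: for every increasing subsequence L* of L of length s*+1 and every decreasing subsequence Q of the m°°-complement L°° (defined by L°°_i = m − L_i) satisfying L*_i + Q_i ≤ m − M for all i, the total shift Σ_i (position of Q_i in L°°, counted from the corresponding complementary position of L*_i) is at least M·s* + 1. Concretely: each of the s*+1 entries contributes at least M−1 shifts, at most M−1 entries contribute exactly M−1 shifts, and hence the total number of shifts is at least (M−1)(M−1) + M(s*+1−(M−1)) = M·s* + 1. -/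

import Mathlib

/-- Claim on nearly-consecutive sequences: let `L` be the increasing
nearly-consecutive sequence of length `s+1` starting at `0` with
distinguished index `j₀` (`2 ≤ j₀ ≤ s`), and let `m > s`, `M ≥ 2`. If
`L*` is the increasing subsequence of `L` indexed by the strictly
increasing `v : Fin (s*+1) → Fin (s+1)`, and `Q` is the decreasing
subsequence of the `m°°`-complement `L°°ᵢ = m - Lᵢ` indexed by the strictly
increasing `w`, with `L*ᵢ + Qᵢ ≤ m - M` for all `i`, then `Q` is obtained
from the complement of `L*` by shifting in at least `M·s* + 1` places:
`Σᵢ (w(i) - v(i)) ≥ M·s* + 1`. -/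
theorem nearly_consecutive_shift_bound (s sstar m M j₀ : ℕ)
    (hm : s < m) (hM : 2 ≤ M) (hj₀ : 2 ≤ j₀) (hj₀' : j₀ ≤ s)
    (hsstar : sstar ≤ s)
    (L : Fin (s + 1) → ℕ) (hL0 : L 0 = 0)
    (hLstep : ∀ i : Fin s,
      L i.succ = L i.castSucc + (if i.val + 1 = j₀ then 2 else 1))
    (v w : Fin (sstar + 1) → Fin (s + 1))
    (hv : StrictMono v) (hw : StrictMono w)
    (hQ : ∀ i : Fin (sstar + 1),
      (L (v i) : ℤ) + ((m : ℤ) - L (w i)) ≤ (m : ℤ) - M) :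
    (M : ℤ) * sstar + 1 ≤ ∑ i : Fin (sstar + 1), ((w i : ℤ) - (v i : ℤ)) := by
  -- Closed form for L
  have hL : ∀ i : Fin (s + 1), (L i : ℤ) = i.val + (if j₀ ≤ i.val then 1 else 0) := by
    intro i
    induction i using Fin.induction with
    | zero =>
        simp only [hL0, Fin.val_zero]
        split_ifs <;> omega
    | succ i ih =>
        rw [hLstep i]
        push_cast
        rw [ih]
        simp only [Fin.val_succ, Fin.coe_castSucc]
        split_ifs <;> omega
  have key1 : ∀ i : Fin (sstar + 1), (M : ℤ) - 1 ≤ (w i : ℤ) - (v i : ℤ) := by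
    intro i
    have h := hQ i
    rw [hL (v i), hL (w i)] at h
    split_ifs at h <;> omega
  have key2 : ∀ i : Fin (sstar + 1), ((w i : ℤ) - (v i : ℤ) = (M : ℤ) - 1) →
      ((j₀ : ℤ) - ((M : ℤ) - 1) ≤ (v i : ℤ) ∧ ((v i : ℤ) < j₀)) := by
    intro i hi
    have h := hQ i
    rw [hL (v i), hL (w i)] at h
    split_ifs at h <;> omega
  set T : Finset (Fin (sstar + 1)) :=
    Finset.univ.filter (fun i => (w i : ℤ) - (v i : ℤ) = (M : ℤ) - 1) with hT
  have hTcard : T.card ≤ M - 1 := by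
    have : T.card ≤ (Finset.Ico (j₀ - (M - 1)) j₀).card := by
      apply Finset.card_le_card_of_injOn (fun i => ((v i : ℕ)))
      · intro i hi
        rw [hT, Finset.mem_coe, Finset.mem_filter] at hi
        obtain ⟨h1, h2⟩ := key2 i hi.2
        simp only [Finset.mem_coe, Finset.mem_Ico]
        omega
      · intro a _ b _ hab
        exact hv.injective (Fin.val_injective hab)
    rw [Nat.card_Ico] at this
    omega
  have hsum : ∑ i : Fin (sstar + 1),
      ((M : ℤ) - (if (w i : ℤ) - (v i : ℤ) = (M : ℤ) - 1 then 1 else 0))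
      ≤ ∑ i : Fin (sstar + 1), ((w i : ℤ) - (v i : ℤ)) := by
    apply Finset.sum_le_sum
    intro i _
    have h1 := key1 i
    split_ifs with h <;> omega
  have heval : ∑ i : Fin (sstar + 1),
      ((M : ℤ) - (if (w i : ℤ) - (v i : ℤ) = (M : ℤ) - 1 then 1 else 0))
      = (M : ℤ) * (sstar + 1) - T.card := by
    rw [Finset.sum_sub_distrib, Finset.sum_const, Finset.sum_boole, hT]
    simp [mul_comm]
  have hTZ : (T.card : ℤ) ≤ (M : ℤ) - 1 := by
    have := hTcard; omega
  have : (M : ℤ) * (sstar + 1) - T.card ≤ ∑ i : Fin (sstar + 1), ((w i : ℤ) - (v i : ℤ)) := by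
    rw [← heval]; exact hsum
  nlinarith [this, hTZ]
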